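/- For every integer k ≥ 1, the greatest common divisor of the binomial coefficients C(4k+5, 4j+2) for 0 ≤ j ≤ k divides (4k+5)·2^(4k+1). -/
import Mathlib

open Finset

/-- Pair up a sum over an even range. -/
lemma pair_sum (f : ℕ → ℕ) (n : ℕ) :
    ∑ j ∈ range (2 * n), f j = ∑ i ∈ range n, (f (2 * i) + f (2 * i + 1)) := by
  induction n with
  | zero => simp
  | succ n ih =>
      have h2 : 2 * (n + 1) = (2 * n + 1) + 1 := by ring
      rw [h2, sum_range_succ, sum_range_succ, ih, sum_range_succ]
      omega

/-- Sum of odd-index binomial coefficients. -/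
lemma odd_sum (n : ℕ) :
    ∑ i ∈ range (n + 1), Nat.choose (n + 1) (2 * i + 1) = 2 ^ n := by
  have h1 : ∀ i, Nat.choose (n + 1) (2 * i + 1)
      = Nat.choose n (2 * i) + Nat.choose n (2 * i + 1) := by
    intro i
    rw [Nat.choose_succ_succ]
  calc ∑ i ∈ range (n + 1), Nat.choose (n + 1) (2 * i + 1)
      = ∑ i ∈ range (n + 1), (Nat.choose n (2 * i) + Nat.choose n (2 * i + 1)) := by
        simp_rw [h1]
    _ = ∑ j ∈ range (2 * (n + 1)), Nat.choose n j := (pair_sum _ _).symm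
    _ = ∑ j ∈ range (n + 1), Nat.choose n j := by
        refine (sum_subset ?_ ?_).symm
        · exact range_subset_range.2 (by omega)
        · intro x hx hx'
          simp only [mem_range] at hx hx'
          exact Nat.choose_eq_zero_of_lt (by omega)
    _ = 2 ^ n := Nat.sum_range_choose n

/-- Sum of binomial coefficients `C(4k+4, 4j+1)`. -/
lemma quarter_sum (k : ℕ) :
    ∑ j ∈ range (k + 1), Nat.choose (4 * k + 4) (4 * j + 1) = 2 ^ (4 * k + 2) := by
  set m := 4 * k + 4 with hm
  have hsymm : ∑ j ∈ range (k + 1), Nat.choose m (4 * j + 3)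
      = ∑ j ∈ range (k + 1), Nat.choose m (4 * j + 1) := by
    refine sum_nbij' (fun j => k - j) (fun j => k - j) ?_ ?_ ?_ ?_ ?_
    · intro a ha; simp only [mem_range] at *; omega
    · intro a ha; simp only [mem_range] at *; omega
    · intro a ha; simp only [mem_range] at ha; show k - (k - a) = a; omega
    · intro a ha; simp only [mem_range] at ha; show k - (k - a) = a; omega
    · intro a ha
      simp only [mem_range] at ha
      have h1 : 4 * a + 3 ≤ m := by omega
      have h2 : m - (4 * a + 3) = 4 * (k - a) + 1 := by omega
      rw [← Nat.choose_symm h1, h2]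
  have hpair : ∑ i ∈ range (2 * (k + 1)), Nat.choose m (2 * i + 1)
      = ∑ j ∈ range (k + 1), (Nat.choose m (2 * (2 * j) + 1)
          + Nat.choose m (2 * (2 * j + 1) + 1)) :=
    pair_sum (fun i => Nat.choose m (2 * i + 1)) (k + 1)
  have hodd : ∑ i ∈ range (4 * k + 3 + 1), Nat.choose m (2 * i + 1) = 2 ^ (4 * k + 3) := by
    have := odd_sum (4 * k + 3)
    simpa [hm] using this
  have hext : ∑ i ∈ range (2 * (k + 1)), Nat.choose m (2 * i + 1)
      = ∑ i ∈ range (4 * k + 3 + 1), Nat.choose m (2 * i + 1) := by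
    refine sum_subset (range_subset_range.2 (by omega)) ?_
    intro x hx hx'
    simp only [mem_range] at hx hx'
    exact Nat.choose_eq_zero_of_lt (by omega)
  have hsplit : ∑ j ∈ range (k + 1), (Nat.choose m (2 * (2 * j) + 1)
      + Nat.choose m (2 * (2 * j + 1) + 1))
      = ∑ j ∈ range (k + 1), Nat.choose m (4 * j + 1)
        + ∑ j ∈ range (k + 1), Nat.choose m (4 * j + 3) := by
    rw [← sum_add_distrib]
    refine sum_congr rfl fun j _ => ?_
    congr 2 <;> ring
  have key : 2 * ∑ j ∈ range (k + 1), Nat.choose m (4 * j + 1) = 2 ^ (4 * k + 3) := by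
    rw [← hodd, ← hext, hpair, hsplit, hsymm]
    ring
  have h2 : 2 ^ (4 * k + 3) = 2 * 2 ^ (4 * k + 2) := by ring
  omega

/-- For every integer `k ≥ 1`, the gcd of the binomial coefficients
`C(4k+5, 4j+2)` for `0 ≤ j ≤ k` divides `(4k+5) · 2^(4k+1)`. -/
theorem gcd_binomials_dvd (k : ℕ) (hk : 1 ≤ k) :
    (Finset.range (k + 1)).gcd (fun j => Nat.choose (4 * k + 5) (4 * j + 2)) ∣
      (4 * k + 5) * 2 ^ (4 * k + 1) := by
  set d := (Finset.range (k + 1)).gcd (fun j => Nat.choose (4 * k + 5) (4 * j + 2)) with hd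
  have hdvd : d ∣ ∑ j ∈ range (k + 1), (2 * j + 1) * Nat.choose (4 * k + 5) (4 * j + 2) := by
    refine dvd_sum fun j hj => ?_
    exact Dvd.dvd.mul_left (gcd_dvd hj) _
  have hterm : ∀ j, (4 * j + 2) * Nat.choose (4 * k + 5) (4 * j + 2)
      = (4 * k + 5) * Nat.choose (4 * k + 4) (4 * j + 1) := by
    intro j
    have h := Nat.add_one_mul_choose_eq (4 * k + 4) (4 * j + 1)
    have h' : (4 * k + 5) * Nat.choose (4 * k + 4) (4 * j + 1)
        = Nat.choose (4 * k + 5) (4 * j + 2) * (4 * j + 2) := by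
      simpa [Nat.succ_eq_add_one] using h
    rw [h']
    exact mul_comm _ _
  have hsum : 2 * ∑ j ∈ range (k + 1), (2 * j + 1) * Nat.choose (4 * k + 5) (4 * j + 2)
      = 2 * ((4 * k + 5) * 2 ^ (4 * k + 1)) := by
    rw [mul_sum]
    have : ∀ j, 2 * ((2 * j + 1) * Nat.choose (4 * k + 5) (4 * j + 2))
        = (4 * k + 5) * Nat.choose (4 * k + 4) (4 * j + 1) := by
      intro j
      rw [← hterm j]; ring
    simp_rw [this]
    rw [← mul_sum, quarter_sum]
    ring
  have hsum' : ∑ j ∈ range (k + 1), (2 * j + 1) * Nat.choose (4 * k + 5) (4 * j + 2)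
      = (4 * k + 5) * 2 ^ (4 * k + 1) :=
    Nat.eq_of_mul_eq_mul_left two_pos hsum
  rwa [hsum'] at hdvd
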